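/- Let η₁²(t) = ∫₀ᵗ (η²(s²)/s²)(1 + |log s|²) ds where η: [0,1] → [0,∞) is increasing with η(t) ≤ Ct^{1/2+α} for some C, α > 0. Then η₁ satisfies the doubling property: η₁(2r) ≤ C' η₁(r) for all r ∈ (0, 1/2], with C' depending only on C, α. -/

import Mathlib

open Real MeasureTheory

set_option maxHeartbeats 1000000

theorem eta1_doubling (C α : ℝ) (hC : 0 < C) (hα : 0 < α) :
    ∃ C' : ℝ, 0 < C' ∧ ∀ η : ℝ → ℝ,
      (∀ x y, 0 ≤ x → x ≤ y → y ≤ 1 → η x ≤ η y) →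
      ContinuousOn η (Set.Icc 0 1) →
      η 0 = 0 →
      (∀ t ∈ Set.Icc (0:ℝ) 1, 0 ≤ η t) →
      ConcaveOn ℝ (Set.Icc 0 1) η →
      (∀ x y, 0 < x → x ≤ y → y ≤ 1 → η y / y ≤ η x / x) →
      (∀ t ∈ Set.Icc (0:ℝ) 1, η t ≤ C * t ^ (1/2 + α)) →
      ∀ r ∈ Set.Ioc (0:ℝ) (1/2),
        Real.sqrt (∫ s in Set.Ioo (0:ℝ) (2*r),
            (η (s ^ 2)) ^ 2 / s ^ 2 * (1 + |Real.log s| ^ 2)) ≤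
          C' * Real.sqrt (∫ s in Set.Ioo (0:ℝ) r,
            (η (s ^ 2)) ^ 2 / s ^ 2 * (1 + |Real.log s| ^ 2)) := by
  refine ⟨5, by norm_num, ?_⟩
  intro η hmono hcont hzero hnonneg hconc hdiv hgrow r hr
  obtain ⟨hr0, hr2⟩ := hr
  set g : ℝ → ℝ := fun s => (η (s ^ 2)) ^ 2 / s ^ 2 * (1 + |Real.log s| ^ 2) with hgdef
  have hg_nonneg : ∀ s, 0 ≤ g s := fun s => by positivity
  -- continuity of g on (0,1)
  have hmaps : ∀ s ∈ Set.Ioo (0:ℝ) 1, s ^ 2 ∈ Set.Icc (0:ℝ) 1 := by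
    intro s hs
    constructor <;> nlinarith [hs.1, hs.2]
  have hcont_g : ContinuousOn g (Set.Ioo 0 1) := by
    have h1 : ContinuousOn (fun s : ℝ => η (s ^ 2)) (Set.Ioo 0 1) :=
      hcont.comp (continuous_pow 2).continuousOn hmaps
    have h2 : ContinuousOn (fun s : ℝ => (η (s ^ 2)) ^ 2 / s ^ 2) (Set.Ioo 0 1) :=
      (h1.pow 2).div (continuous_pow 2).continuousOn
        (fun s hs => pow_ne_zero 2 (ne_of_gt hs.1))
    have h3 : ContinuousOn (fun s : ℝ => 1 + |Real.log s| ^ 2) (Set.Ioo 0 1) := by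
      apply continuousOn_const.add
      exact ((Real.continuousOn_log.mono (fun s hs => by
        simp only [Set.mem_compl_iff, Set.mem_singleton_iff]
        exact ne_of_gt hs.1)).abs.pow 2)
    exact h2.mul h3
  -- the uniform bound on (0,1)
  have hbound : ∀ s ∈ Set.Ioo (0:ℝ) 1, g s ≤ C^2 * (1 + 1/α^2) := by
    intro s hs
    have hs0 : 0 < s := hs.1
    have hs1 : s < 1 := hs.2
    have h2 : (0:ℝ) < s ^ 2 := by positivity
    have h3 : s ^ 2 ≤ 1 := by nlinarith
    have hη : η (s ^ 2) ≤ C * (s ^ 2) ^ (1/2 + α) := hgrow _ ⟨le_of_lt h2, h3⟩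
    have hηn : 0 ≤ η (s ^ 2) := hnonneg _ ⟨le_of_lt h2, h3⟩
    have hrp : (0:ℝ) ≤ (s^2 : ℝ) ^ (1/2 + α) := Real.rpow_nonneg (le_of_lt h2) _
    have hsq : (η (s ^ 2)) ^ 2 ≤ C^2 * ((s^2 : ℝ) ^ ((1:ℝ)/2 + α)) ^ 2 := by
      nlinarith [hη, hηn, hrp, hC]
    have e1 : ((s^2 : ℝ) ^ ((1:ℝ)/2 + α)) ^ 2 = s^2 * ((s^2 : ℝ) ^ α) ^ 2 := by
      rw [← Real.rpow_natCast ((s^2 : ℝ) ^ ((1:ℝ)/2 + α)) 2,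
          ← Real.rpow_natCast ((s^2 : ℝ) ^ α) 2,
          ← Real.rpow_mul (le_of_lt (by positivity : (0:ℝ) < s^2)),
          ← Real.rpow_mul (le_of_lt (by positivity : (0:ℝ) < s^2))]
      push_cast
      rw [show ((1:ℝ)/2 + α) * 2 = 1 + α * 2 by ring, Real.rpow_add h2, Real.rpow_one]
    have hrpa : (0:ℝ) < (s^2 : ℝ) ^ α := Real.rpow_pos_of_pos h2 _
    have hrpa1 : (s^2 : ℝ) ^ α ≤ 1 := Real.rpow_le_one (le_of_lt h2) h3 (le_of_lt hα)
    have hlog : (s^2 : ℝ) ^ α * |Real.log s| ≤ 1 / (2*α) := by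
      have := Real.abs_log_mul_self_rpow_lt (s^2) α h2 h3 hα
      rw [abs_mul, abs_of_pos hrpa] at this
      have hl2 : |Real.log (s^2)| = 2 * |Real.log s| := by
        rw [Real.log_pow]
        push_cast
        rw [abs_mul, abs_two]
      rw [hl2, lt_div_iff₀ hα] at this
      rw [le_div_iff₀ (by positivity : (0:ℝ) < 2*α)]
      nlinarith [this]
    have hkey : ((s^2 : ℝ) ^ α) ^ 2 * (1 + |Real.log s| ^ 2) ≤ 1 + 1/α^2 := by
      have hla : 0 ≤ |Real.log s| := abs_nonneg _
      have h4 : ((s^2 : ℝ) ^ α) ^ 2 * |Real.log s| ^ 2 ≤ 1 / (4*α^2) := by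
        calc ((s^2 : ℝ) ^ α) ^ 2 * |Real.log s| ^ 2 = ((s^2 : ℝ) ^ α * |Real.log s|) ^ 2 := by
              ring
          _ ≤ (1/(2*α))^2 := pow_le_pow_left₀ (by positivity) hlog 2
          _ = 1/(4*α^2) := by field_simp; ring
      have h5 : ((s^2 : ℝ) ^ α) ^ 2 ≤ 1 := by nlinarith
      have h6 : 1 / (4*α^2) ≤ 1/α^2 := by
        apply div_le_div_of_nonneg_left (by norm_num) (by positivity) (by nlinarith)
      nlinarith
    calc g s = (η (s ^ 2)) ^ 2 / s ^ 2 * (1 + |Real.log s| ^ 2) := rfl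
      _ ≤ (C^2 * ((s^2 : ℝ) ^ ((1:ℝ)/2 + α)) ^ 2) / s^2 * (1 + |Real.log s| ^ 2) := by
          exact mul_le_mul_of_nonneg_right
            (by gcongr) (by positivity)
      _ = C^2 * (((s^2 : ℝ) ^ α) ^ 2 * (1 + |Real.log s| ^ 2)) := by
          rw [e1]; field_simp
      _ ≤ C^2 * (1 + 1/α^2) := by
          have : (0:ℝ) ≤ C^2 := sq_nonneg C
          exact mul_le_mul_of_nonneg_left hkey this
  -- integrability on (0,1)
  have hInt1 : IntegrableOn g (Set.Ioo (0:ℝ) 1) := by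
    refine Integrable.mono' (g := fun _ => C^2 * (1 + 1/α^2)) ?_
      (hcont_g.aestronglyMeasurable measurableSet_Ioo) ?_
    · exact integrableOn_const (by simp [Real.volume_Ioo])
    · filter_upwards [ae_restrict_mem measurableSet_Ioo] with s hs
      rw [Real.norm_eq_abs, abs_of_nonneg (hg_nonneg s)]
      exact hbound s hs
  have hII : ∀ a b : ℝ, 0 ≤ a → a ≤ b → b ≤ 1 → IntervalIntegrable g volume a b := by
    intro a b ha hab hb1
    rw [intervalIntegrable_iff_integrableOn_Ioo_of_le hab]
    exact hInt1.mono_set (Set.Ioo_subset_Ioo ha hb1)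
  have h2r1 : 2 * r ≤ 1 := by linarith
  have hr1 : r ≤ 1 := by linarith
  -- convert set integrals to interval integrals
  have hIoo : ∀ t : ℝ, 0 ≤ t → (∫ s in Set.Ioo (0:ℝ) t, g s) = ∫ s in (0:ℝ)..t, g s := by
    intro t ht
    rw [intervalIntegral.integral_of_le ht, integral_Ioc_eq_integral_Ioo]
  -- pointwise doubling bound
  have hpt : ∀ x ∈ Set.Icc (r/2) r, g (2*x) ≤ 8 * g x := by
    intro x hx
    have hx0 : 0 < x := lt_of_lt_of_le (by linarith) hx.1
    have hxr : x ≤ r := hx.2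
    have hx2 : (0:ℝ) < x^2 := by positivity
    have h4x : 4 * x^2 ≤ 1 := by nlinarith
    have hd := hdiv (x^2) (4*x^2) hx2 (by nlinarith) h4x
    have hη4 : η (4*x^2) ≤ 4 * η (x^2) := by
      rw [div_le_div_iff₀ (by positivity) hx2] at hd
      nlinarith [hd, hx2]
    have hη4n : 0 ≤ η (4*x^2) := hnonneg _ ⟨by positivity, h4x⟩
    have hηn : 0 ≤ η (x^2) := hnonneg _ ⟨le_of_lt hx2, by nlinarith⟩
    have hsq : (η (4*x^2))^2 ≤ 16 * (η (x^2))^2 := by nlinarith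
    have hlog2 : 1 + |Real.log (2*x)|^2 ≤ 2 * (1 + |Real.log x|^2) := by
      have habs : |Real.log (2*x)| ≤ Real.log 2 + |Real.log x| := by
        rw [Real.log_mul (by norm_num) (ne_of_gt hx0)]
        calc |Real.log 2 + Real.log x| ≤ |Real.log 2| + |Real.log x| := abs_add_le _ _
          _ = Real.log 2 + |Real.log x| := by
              rw [abs_of_pos (Real.log_pos (by norm_num))]
      have hl2 := Real.log_two_lt_d9
      have hl2p := Real.log_pos (by norm_num : (1:ℝ) < 2)
      have hla := abs_nonneg (Real.log x)
      have hla2 := abs_nonneg (Real.log (2*x))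
      nlinarith [sq_nonneg (Real.log 2 - |Real.log x|), habs]
    have heq : g (2*x) = (η (4*x^2))^2 / (4*x^2) * (1 + |Real.log (2*x)|^2) := by
      simp only [hgdef]
      rw [show ((2*x)^2 : ℝ) = 4*x^2 by ring]
    rw [heq]
    calc (η (4*x^2))^2 / (4*x^2) * (1 + |Real.log (2*x)|^2)
        ≤ (16 * (η (x^2))^2) / (4*x^2) * (2 * (1 + |Real.log x|^2)) := by
          apply mul_le_mul _ hlog2 (by positivity) (by positivity)
          gcongr
      _ = 8 * g x := by
          simp only [hgdef]
          field_simp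
          ring
  -- integrability of the composed function
  have hIIr2r : IntervalIntegrable g volume r (2*r) := hII r (2*r) (le_of_lt hr0) (by linarith) h2r1
  have hcomp : IntervalIntegrable (fun x => g (2*x)) volume (r/2) r := by
    have h := hIIr2r.comp_mul_left (c := 2)
    rw [show (r:ℝ)/2 = r/2 by ring, show (2*r:ℝ)/2 = r by ring] at h
    exact h
  -- the substitution identity
  have hsub : ∫ x in (r/2)..r, g (2*x) = 2⁻¹ * ∫ s in r..(2*r), g s := by
    have h := intervalIntegral.integral_comp_mul_left g (a := r/2) (b := r) (c := 2) (by norm_num)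
    rw [show (2:ℝ) * (r/2) = r by ring] at h
    simpa using h
  -- putting it together
  have hstep : ∫ s in r..(2*r), g s ≤ 16 * ∫ s in (0:ℝ)..r, g s := by
    have h1 : ∫ x in (r/2)..r, g (2*x) ≤ ∫ x in (r/2)..r, 8 * g x := by
      apply intervalIntegral.integral_mono_on (by linarith) hcomp
        ((hII (r/2) r (by linarith) (by linarith) hr1).const_mul 8) hpt
    rw [intervalIntegral.integral_const_mul] at h1
    have h2 : ∫ x in (r/2)..r, g x ≤ ∫ x in (0:ℝ)..r, g x := by
      have hadd := intervalIntegral.integral_add_adjacent_intervals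
        (hII 0 (r/2) (le_refl 0) (by linarith) (by linarith))
        (hII (r/2) r (by linarith) (by linarith) hr1)
      have hpos : 0 ≤ ∫ x in (0:ℝ)..(r/2), g x :=
        intervalIntegral.integral_nonneg (by linarith) (fun u _ => hg_nonneg u)
      linarith [hadd]
    have h3 : ∫ s in r..(2*r), g s = 2 * ∫ x in (r/2)..r, g (2*x) := by
      rw [hsub]; ring
    linarith
  have hsplit : ∫ s in (0:ℝ)..(2*r), g s = (∫ s in (0:ℝ)..r, g s) + ∫ s in r..(2*r), g s :=
    (intervalIntegral.integral_add_adjacent_intervals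
      (hII 0 r (le_refl 0) (le_of_lt hr0) hr1) hIIr2r).symm
  have hItotal : ∫ s in (0:ℝ)..(2*r), g s ≤ 17 * ∫ s in (0:ℝ)..r, g s := by
    linarith
  have hIr_nonneg : 0 ≤ ∫ s in (0:ℝ)..r, g s :=
    intervalIntegral.integral_nonneg (le_of_lt hr0) (fun u _ => hg_nonneg u)
  -- final sqrt computation
  rw [hIoo (2*r) (by linarith), hIoo r (le_of_lt hr0)]
  calc Real.sqrt (∫ s in (0:ℝ)..(2*r), g s)
      ≤ Real.sqrt (17 * ∫ s in (0:ℝ)..r, g s) := Real.sqrt_le_sqrt hItotal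
    _ = Real.sqrt 17 * Real.sqrt (∫ s in (0:ℝ)..r, g s) := Real.sqrt_mul (by norm_num) _
    _ ≤ 5 * Real.sqrt (∫ s in (0:ℝ)..r, g s) := by
        apply mul_le_mul_of_nonneg_right _ (Real.sqrt_nonneg _)
        rw [show (5:ℝ) = Real.sqrt 25 by rw [show (25:ℝ) = 5^2 by norm_num, Real.sqrt_sq]; norm_num]
        exact Real.sqrt_le_sqrt (by norm_num)
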